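/- arXiv:2308.11293 — 4 statements merged into one kernel-verified Lean document; each statement's English description precedes it below -/
import Mathlib

section
/- Let T ≥ 1 be an integer and let θ : ℤ → ℝ satisfy θ(t+T) = θ(t) for all t ∈ ℤ and θ(v) ≠ 0 for all v ∈ ℤ. Define g(t,0) = 1 and g(t,j) = ∏_{i=0}^{j−1} θ(t−i) for j ≥ 1, and set P = θ(1)θ(2)⋯θ(T). Then for every t ∈ ℤ the series ∑_{j=0}^∞ |g(t,j)| converges if and only if |P| < 1. -/
/-- For `θ : ℤ → ℝ` periodic with period `T` and nowhere zero, with transition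
products `g(t,j) = ∏_{i=0}^{j-1} θ(t-i)` and per-period product `P = θ(1)⋯θ(T)`, the series
`∑_{j=0}^∞ |g(t,j)|` converges if and only if `|P| < 1`. -/
theorem scalar_transition_abs_summable_iff (T : ℕ) (hT : 1 ≤ T) (θ : ℤ → ℝ)
    (hper : ∀ t : ℤ, θ (t + T) = θ t)
    (hne : ∀ v : ℤ, θ v ≠ 0)
    (g : ℤ → ℕ → ℝ)
    (hg : ∀ (t : ℤ) (j : ℕ), g t j = ∏ i ∈ Finset.range j, θ (t - i))
    (P : ℝ) (hP : P = ∏ i ∈ Finset.range T, θ (i + 1)) :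
    ∀ t : ℤ, Summable (fun j : ℕ => |g t j|) ↔ |P| < 1 := by
  haveI : NeZero T := ⟨by omega⟩
  -- H a := ∏ i < T, θ (a - i)
  set H : ℤ → ℝ := fun a => ∏ i ∈ Finset.range T, θ (a - i) with hHdef
  have hθ : ∀ a : ℤ, θ (a - T) = θ a := by
    intro a
    have := hper (a - T); rw [sub_add_cancel] at this; exact this.symm
  have hstep : ∀ a : ℤ, H (a + 1) = H a := by
    intro a
    have h1 : ∏ i ∈ Finset.range (T + 1), θ (a + 1 - i)
        = H (a + 1) * θ (a + 1 - T) := by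
      rw [Finset.prod_range_succ]
    have h2 : ∏ i ∈ Finset.range (T + 1), θ (a + 1 - i)
        = H a * θ (a + 1) := by
      rw [Finset.prod_range_succ']
      congr 1
      · apply Finset.prod_congr rfl
        intro i _
        congr 1
        push_cast
        ring
      · norm_num
    have hth : θ (a + 1 - T) = θ (a + 1) := hθ (a + 1)
    rw [hth] at h1
    have := h1.symm.trans h2
    exact mul_right_cancel₀ (hne (a + 1)) this
  have hconst : ∀ a : ℤ, H a = H 0 := by
    intro a
    induction a using Int.induction_on with
    | zero => rfl
    | succ k ih => rw [hstep k, ih]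
    | pred k ih =>
      have := hstep (-(k : ℤ) - 1)
      rw [sub_add_cancel] at this
      rw [← this]
      exact ih
  have hHT : H T = P := by
    rw [hP, ← Finset.prod_range_reflect]
    apply Finset.prod_congr rfl
    intro j hj
    have hj' : j < T := Finset.mem_range.mp hj
    congr 1
    omega
  have hkey : ∀ a : ℤ, H a = P := fun a => (hconst a).trans ((hconst T).symm.trans hHT)
  intro t
  -- g t (j + T) = g t j * P
  have hshift : ∀ j : ℕ, g t (j + T) = g t j * P := by
    intro j
    rw [hg, hg, Finset.prod_range_add]
    congr 1
    rw [← hkey (t - j)]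
    apply Finset.prod_congr rfl
    intro i _
    congr 1
    push_cast
    ring
  have hg0 : g t 0 = 1 := by rw [hg]; simp
  -- g t (q*T + r) = P^q * g t r
  have hqr : ∀ q r : ℕ, g t (q * T + r) = P ^ q * g t r := by
    intro q
    induction q with
    | zero => intro r; simp
    | succ q ih =>
      intro r
      have : (q + 1) * T + r = (q * T + r) + T := by ring
      rw [this, hshift, ih, pow_succ]
      ring
  constructor
  · intro hsum
    have h0 : Filter.Tendsto (fun j : ℕ => |g t j|) Filter.atTop (nhds 0) :=
      hsum.tendsto_atTop_zero
    have hmul : Filter.Tendsto (fun q : ℕ => q * T) Filter.atTop Filter.atTop := by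
      apply Filter.tendsto_atTop_mono (f := id) (fun q => Nat.le_mul_of_pos_right q (by omega))
      exact Filter.tendsto_id
    have h1 : Filter.Tendsto (fun q : ℕ => |g t (q * T)|) Filter.atTop (nhds 0) :=
      h0.comp hmul
    have h2 : Filter.Tendsto (fun q : ℕ => |P| ^ q) Filter.atTop (nhds 0) := by
      have : (fun q : ℕ => |P| ^ q) = fun q : ℕ => |g t (q * T)| := by
        funext q
        have := hqr q 0
        rw [Nat.add_zero] at this
        rw [this, hg0, mul_one, abs_pow]
      rw [this]; exact h1
    have := tendsto_pow_atTop_nhds_zero_iff.mp h2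
    rwa [abs_abs] at this
  · intro hPlt
    have hf : Summable (fun p : ℕ × Fin T => |P| ^ p.1 * |g t (p.2 : ℕ)|) := by
      rw [summable_prod_of_nonneg (by
        intro p
        exact mul_nonneg (pow_nonneg (abs_nonneg P) _) (abs_nonneg _))]
      constructor
      · intro q
        exact Summable.of_finite
      · apply Summable.congr ((summable_geometric_of_lt_one (abs_nonneg P) hPlt).mul_right
          (∑' r : Fin T, |g t (r : ℕ)|))
        intro q
        rw [← tsum_mul_left]
    refine ((Nat.divModEquiv T).symm.summable_iff (f := fun j : ℕ => |g t j|)).mp ?_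
    apply hf.congr
    intro p
    show |P| ^ p.1 * |g t (p.2 : ℕ)| = |g t ((Nat.divModEquiv T).symm p)|
    have : ((Nat.divModEquiv T).symm p : ℕ) = p.1 * T + (p.2 : ℕ) := rfl
    rw [this, hqr, abs_mul, abs_pow]
end

section
/- Let T ≥ 1 be an integer, let 1 < α ≤ 2, and let θ_r, θ_l : ℤ → ℝ satisfy θ_r(t+T) = θ_r(t) and θ_l(t+T) = θ_l(t) for all t ∈ ℤ. Define g_r(t,0) = g_l(t,0) = 1, g_r(t,j) = ∏_{i=0}^{j−1} θ_r(t−i) and g_l(t,j) = ∏_{i=0}^{j−1} θ_l(t−i) for j ≥ 1, and set P_r = θ_r(1)⋯θ_r(T), P_l = θ_l(1)⋯θ_l(T). If |P_r| < 1 and |P_l| < 1, then for every t ∈ ℤ the series ∑_{j=0}^∞ (g_l(t,j))^{⟨α−1⟩} g_r(t,j) converges absolutely and ∑_{j=0}^∞ (g_l(t,j))^{⟨α−1⟩} g_r(t,j) = (1 / (1 − P_l^{⟨α−1⟩} P_r)) · ∑_{k=0}^{T−1} (g_l(t,k))^{⟨α−1⟩} g_r(t,k), where in particular |P_l^{⟨α−1⟩}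 P_r| < 1 so the right-hand side is well defined. -/
/-- The signed power `x^{⟨a⟩} = |x|^a · sign(x)`. -/
noncomputable def signedPow (x a : ℝ) : ℝ := |x| ^ a * Real.sign x

lemma real_sign_mul (x y : ℝ) : Real.sign (x * y) = Real.sign x * Real.sign y := by
  rcases lt_trichotomy x 0 with hx | rfl | hx
  · rcases lt_trichotomy y 0 with hy | rfl | hy
    · rw [Real.sign_of_pos (mul_pos_of_neg_of_neg hx hy), Real.sign_of_neg hx,
        Real.sign_of_neg hy]; ring
    · simp [Real.sign_zero]
    · rw [Real.sign_of_neg (mul_neg_of_neg_of_pos hx hy), Real.sign_of_neg hx,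
        Real.sign_of_pos hy]; ring
  · simp [Real.sign_zero]
  · rcases lt_trichotomy y 0 with hy | rfl | hy
    · rw [Real.sign_of_neg (mul_neg_of_pos_of_neg hx hy), Real.sign_of_pos hx,
        Real.sign_of_neg hy]; ring
    · simp [Real.sign_zero]
    · rw [Real.sign_of_pos (mul_pos hx hy), Real.sign_of_pos hx, Real.sign_of_pos hy]; ring

lemma signedPow_mul (x y a : ℝ) : signedPow (x * y) a = signedPow x a * signedPow y a := by
  unfold signedPow
  rw [abs_mul, Real.mul_rpow (abs_nonneg x) (abs_nonneg y), real_sign_mul]; ring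

lemma signedPow_one (a : ℝ) : signedPow 1 a = 1 := by
  simp [signedPow, Real.sign_one]

lemma signedPow_pow (x a : ℝ) (n : ℕ) : signedPow (x ^ n) a = (signedPow x a) ^ n := by
  induction n with
  | zero => simpa using signedPow_one a
  | succ n ih => rw [pow_succ, signedPow_mul, ih, pow_succ]

lemma abs_sign_le (x : ℝ) : |Real.sign x| ≤ 1 := by
  rcases Real.sign_apply_eq x with h | h | h <;> rw [h] <;> norm_num

lemma abs_signedPow_le (x a : ℝ) : |signedPow x a| ≤ |x| ^ a := by
  unfold signedPow
  rw [abs_mul, abs_of_nonneg (Real.rpow_nonneg (abs_nonneg x) a)]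
  calc |x| ^ a * |Real.sign x| ≤ |x| ^ a * 1 :=
        mul_le_mul_of_nonneg_left (abs_sign_le x) (Real.rpow_nonneg (abs_nonneg x) a)
    _ = |x| ^ a := mul_one _

set_option maxHeartbeats 1000000 in
/-- For periodic `θ_r, θ_l : ℤ → ℝ` with per-period products `P_r, P_l` of
absolute value less than one, the series `∑_j (g_l(t,j))^{⟨α-1⟩} g_r(t,j)` converges
absolutely, with sum `(1/(1 - P_l^{⟨α-1⟩} P_r)) · ∑_{k=0}^{T-1} (g_l(t,k))^{⟨α-1⟩} g_r(t,k)`;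
in particular `|P_l^{⟨α-1⟩} P_r| < 1`. -/
theorem crosscovariation_series_closed_form (T : ℕ) (hT : 1 ≤ T)
    (α : ℝ) (hα1 : 1 < α) (hα2 : α ≤ 2)
    (θr θl : ℤ → ℝ)
    (hperr : ∀ t : ℤ, θr (t + T) = θr t)
    (hperl : ∀ t : ℤ, θl (t + T) = θl t)
    (gr gl : ℤ → ℕ → ℝ)
    (hgr : ∀ (t : ℤ) (j : ℕ), gr t j = ∏ i ∈ Finset.range j, θr (t - i))
    (hgl : ∀ (t : ℤ) (j : ℕ), gl t j = ∏ i ∈ Finset.range j, θl (t - i))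
    (Pr Pl : ℝ)
    (hPr : Pr = ∏ i ∈ Finset.range T, θr (i + 1))
    (hPl : Pl = ∏ i ∈ Finset.range T, θl (i + 1))
    (hPrlt : |Pr| < 1) (hPllt : |Pl| < 1) :
    |signedPow Pl (α - 1) * Pr| < 1 ∧
      ∀ t : ℤ,
        Summable (fun j : ℕ => |signedPow (gl t j) (α - 1) * gr t j|) ∧
        ∑' j : ℕ, signedPow (gl t j) (α - 1) * gr t j
          = (1 / (1 - signedPow Pl (α - 1) * Pr))
            * ∑ k ∈ Finset.range T, signedPow (gl t k) (α - 1) * gr t k := by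
  haveI : NeZero T := ⟨by omega⟩
  set a : ℝ := α - 1 with ha
  have ha0 : 0 < a := by simp only [ha]; linarith
  set q : ℝ := signedPow Pl a * Pr with hq
  -- |q| < 1
  have hqlt : |q| < 1 := by
    have h1 : |signedPow Pl a| ≤ |Pl| ^ a := abs_signedPow_le Pl a
    have h2 : |Pl| ^ a ≤ 1 :=
      Real.rpow_le_one (abs_nonneg Pl) hPllt.le ha0.le
    have h3 : |q| = |signedPow Pl a| * |Pr| := abs_mul _ _
    have h4 : |signedPow Pl a| * |Pr| ≤ 1 * |Pr| :=
      mul_le_mul_of_nonneg_right (h1.trans h2) (abs_nonneg Pr)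
    rw [h3]
    calc |signedPow Pl a| * |Pr| ≤ 1 * |Pr| := h4
      _ = |Pr| := one_mul _
      _ < 1 := hPrlt
  -- key: the product of θ over any T consecutive integers equals the per-period product
  have key : ∀ (θ : ℤ → ℝ), (∀ t : ℤ, θ (t + T) = θ t) →
      ∀ s : ℤ, ∏ i ∈ Finset.range T, θ (s - i) = ∏ i ∈ Finset.range T, θ (i + 1) := by
    intro θ hper
    obtain ⟨m, hm⟩ : ∃ m, T = m + 1 := ⟨T - 1, by omega⟩
    subst hm
    have step : ∀ s : ℤ, ∏ i ∈ Finset.range (m + 1), θ (s + 1 - i)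
        = ∏ i ∈ Finset.range (m + 1), θ (s - i) := by
      intro s
      rw [Finset.prod_range_succ' (fun i : ℕ => θ (s + 1 - i)) m,
        Finset.prod_range_succ (fun i : ℕ => θ (s - i)) m]
      have h0 : θ (s + 1 - (0 : ℕ)) = θ (s - m) := by
        have := hper (s - m)
        rw [show (s - m) + ((m : ℕ) + 1 : ℕ) = s + 1 - (0 : ℕ) by push_cast; ring] at this
        rw [this]
      rw [h0]
      congr 1
      apply Finset.prod_congr rfl
      intro i _
      congr 1
      push_cast
      ring
    have const : ∀ s : ℤ, ∏ i ∈ Finset.range (m + 1), θ (s - i)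
        = ∏ i ∈ Finset.range (m + 1), θ ((0 : ℤ) - i) := by
      intro s
      induction s using Int.induction_on with
      | zero => rfl
      | succ n ih =>
        have h := step (n : ℤ)
        rw [h, ih]
      | pred n ih =>
        have h := step (-(n : ℤ) - 1)
        rw [show -(n : ℤ) - 1 + 1 = -(n : ℤ) by ring] at h
        rw [← h, ih]
    intro s
    rw [const s, ← const ((m : ℤ) + 1)]
    rw [← Finset.prod_range_reflect (fun j : ℕ => θ ((j : ℤ) + 1)) (m + 1)]
    apply Finset.prod_congr rfl
    intro i hi
    have hi' : i ≤ m := by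
      simpa [Nat.lt_succ_iff] using hi
    congr 1
    have : ((m + 1 - 1 - i : ℕ) : ℤ) = (m : ℤ) - i := by
      push_cast [Nat.cast_sub hi']
      ring
    rw [this]
    ring
  -- recursion for g over one period
  have grec : ∀ (θ : ℤ → ℝ), (∀ t : ℤ, θ (t + T) = θ t) → ∀ (t : ℤ) (j : ℕ),
      ∏ i ∈ Finset.range (j + T), θ (t - i)
        = (∏ i ∈ Finset.range j, θ (t - i)) * ∏ i ∈ Finset.range T, θ (i + 1) := by
    intro θ hper t j
    rw [Finset.prod_range_add]
    congr 1
    rw [← key θ hper (t - j)]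
    apply Finset.prod_congr rfl
    intro i _
    congr 1
    push_cast
    ring
  have grrec : ∀ (t : ℤ) (j : ℕ), gr t (j + T) = gr t j * Pr := by
    intro t j; rw [hgr, hgr, hPr]; exact grec θr hperr t j
  have glrec : ∀ (t : ℤ) (j : ℕ), gl t (j + T) = gl t j * Pl := by
    intro t j; rw [hgl, hgl, hPl]; exact grec θl hperl t j
  have grpow : ∀ (t : ℤ) (m k : ℕ), gr t (m * T + k) = Pr ^ m * gr t k := by
    intro t m k
    induction m with
    | zero => simp
    | succ m ih =>
      have harith : (m + 1) * T + k = (m * T + k) + T := by ring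
      rw [harith, grrec, ih, pow_succ]; ring
  have glpow : ∀ (t : ℤ) (m k : ℕ), gl t (m * T + k) = Pl ^ m * gl t k := by
    intro t m k
    induction m with
    | zero => simp
    | succ m ih =>
      have harith : (m + 1) * T + k = (m * T + k) + T := by ring
      rw [harith, glrec, ih, pow_succ]; ring
  refine ⟨hqlt, fun t => ?_⟩
  set f : ℕ → ℝ := fun j => signedPow (gl t j) a * gr t j with hf
  have hfkey : ∀ (m k : ℕ), f (m * T + k) = q ^ m * f k := by
    intro m k
    simp only [hf]
    rw [glpow, grpow, signedPow_mul, signedPow_pow, hq, mul_pow]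
    ring
  set e : ℕ × Fin T ≃ ℕ := (Nat.divModEquiv T).symm with he
  have heapp : ∀ p : ℕ × Fin T, e p = p.1 * T + (p.2 : ℕ) := fun p => rfl
  have hcomp : ∀ p : ℕ × Fin T, f (e p) = q ^ p.1 * f (p.2 : ℕ) := by
    intro p
    rw [heapp, hfkey]
  -- summability
  have hfin : Summable (fun k : Fin T => |f (k : ℕ)|) := Summable.of_finite
  have hgeo : Summable (fun n : ℕ => |q| ^ n) :=
    summable_geometric_of_lt_one (abs_nonneg q) hqlt
  have hGsum : Summable (fun p : ℕ × Fin T => |q| ^ p.1 * |f (p.2 : ℕ)|) :=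
    Summable.mul_of_nonneg hgeo hfin (fun n => pow_nonneg (abs_nonneg q) n)
      (fun k => abs_nonneg _)
  have hGsum' : Summable (fun p : ℕ × Fin T => |f (e p)|) := by
    refine hGsum.congr fun p => ?_
    rw [hcomp p, abs_mul (q ^ p.1) (f (p.2 : ℕ)), abs_pow]
  have habs : Summable (fun j : ℕ => |f j|) := by
    rw [← e.summable_iff]
    exact hGsum'
  refine ⟨habs, ?_⟩
  have hsum : Summable f := habs.of_abs
  have hsum' : Summable (fun p : ℕ × Fin T => f (e p)) := e.summable_iff.mpr hsum
  have h1 : ∑' j : ℕ, f j = ∑' p : ℕ × Fin T, f (e p) := (e.tsum_eq f).symm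
  have h2 : ∑' p : ℕ × Fin T, f (e p) = ∑' m : ℕ, ∑' k : Fin T, f (e (m, k)) :=
    Summable.tsum_prod hsum'
  have h3 : ∀ m : ℕ, ∑' k : Fin T, f (e (m, k)) = q ^ m * ∑ k ∈ Finset.range T, f k := by
    intro m
    rw [tsum_fintype]
    rw [show ∑ k : Fin T, f (e (m, k)) = ∑ k : Fin T, q ^ m * f (k : ℕ) from
      Finset.sum_congr rfl fun k _ => hcomp (m, k)]
    rw [← Finset.mul_sum, Fin.sum_univ_eq_sum_range]
  calc ∑' j : ℕ, f j = ∑' m : ℕ, q ^ m * ∑ k ∈ Finset.range T, f k := by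
        rw [h1, h2]; exact tsum_congr h3
    _ = (∑' m : ℕ, q ^ m) * ∑ k ∈ Finset.range T, f k := tsum_mul_right
    _ = (1 / (1 - q)) * ∑ k ∈ Finset.range T, f k := by
        rw [tsum_geometric_of_abs_lt_one hqlt, one_div]
end

section
/- Let (Ω, F, ℙ) be a probability space, let m ≥ 1, let Θ be an m×m real matrix, and let W, Z : Ω → ℝ^m be random vectors such that each component of W and each component of Z is integrable, Z is independent of W, E[Z_r] = 0 for every r, and E[|W_l|] > 0 for every l ∈ {1,…,m}. Define Y = Θ W + Z, and define the m×m normalized covariation matrices N^{Y,W} and N^{W,W} by N^{Y,W}_{r,l} = E[Y_r · sign(W_l)] / E[|W_l|] and N^{W,W}_{r,l} = E[W_r · sign(W_l)] / E[|W_l|]. Then N^{Y,W} = Θ · N^{W,W} as m×m matrices; moreover, the diagonal entries of N^{W,W} all equal 1. -/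
open MeasureTheory ProbabilityTheory

lemma measurable_realSign : Measurable Real.sign := by
  have h : Real.sign = fun r : ℝ => if r < 0 then (-1:ℝ) else if 0 < r then 1 else 0 := by
    funext r; rfl
  rw [h]
  exact Measurable.ite measurableSet_Iio measurable_const
    (Measurable.ite measurableSet_Ioi measurable_const measurable_const)

lemma abs_realSign_le_one (x : ℝ) : ‖Real.sign x‖ ≤ 1 := by
  rcases Real.sign_apply_eq x with h | h | h <;> simp [h]

lemma mul_realSign_self (x : ℝ) : x * Real.sign x = |x| := by
  rcases lt_trichotomy x 0 with h | h | h
  · rw [Real.sign_of_neg h, abs_of_neg h]; ring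
  · simp [h]
  · rw [Real.sign_of_pos h, abs_of_pos h]; ring

/-- Normalized Yule–Walker equations. If `Y = Θ W + Z` with `Z` independent of
`W`, all components integrable, `E[Z_r] = 0` and `E[|W_l|] > 0`, then the normalized
covariation matrices `N^{Y,W}_{r,l} = E[Y_r sign(W_l)]/E[|W_l|]` and
`N^{W,W}_{r,l} = E[W_r sign(W_l)]/E[|W_l|]` satisfy `N^{Y,W} = Θ · N^{W,W}`, and all diagonal
entries of `N^{W,W}` equal `1`. -/
theorem yule_walker_normalized_covariation
    {Ω : Type*} [MeasureSpace Ω] [IsProbabilityMeasure (ℙ : Measure Ω)]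
    (m : ℕ) (hm : 1 ≤ m) (Θ : Matrix (Fin m) (Fin m) ℝ)
    (W Z : Ω → Fin m → ℝ) (hWm : Measurable W) (hZm : Measurable Z)
    (hWint : ∀ k : Fin m, Integrable (fun ω => W ω k))
    (hZint : ∀ r : Fin m, Integrable (fun ω => Z ω r))
    (hindep : IndepFun Z W)
    (hZmean : ∀ r : Fin m, ∫ ω, Z ω r = 0)
    (hWpos : ∀ l : Fin m, 0 < ∫ ω, |W ω l|)
    (Y : Ω → Fin m → ℝ) (hY : ∀ ω, Y ω = Θ.mulVec (W ω) + Z ω)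
    (NYW NWW : Matrix (Fin m) (Fin m) ℝ)
    (hNYW : ∀ r l : Fin m,
      NYW r l = (∫ ω, Y ω r * Real.sign (W ω l)) / ∫ ω, |W ω l|)
    (hNWW : ∀ r l : Fin m,
      NWW r l = (∫ ω, W ω r * Real.sign (W ω l)) / ∫ ω, |W ω l|) :
    NYW = Θ * NWW ∧ ∀ l : Fin m, NWW l l = 1 := by
  -- sign of W_l
  have hSm : ∀ l : Fin m, Measurable (fun ω => Real.sign (W ω l)) := fun l =>
    measurable_realSign.comp ((measurable_pi_apply l).comp hWm)
  have hSint : ∀ l : Fin m, Integrable (fun ω => Real.sign (W ω l)) := by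
    intro l
    refine (integrable_const (1:ℝ)).mono' (hSm l).aestronglyMeasurable ?_
    exact Filter.Eventually.of_forall fun ω => abs_realSign_le_one _
  have hmulint : ∀ (f : Ω → ℝ), Integrable f → ∀ l : Fin m,
      Integrable (fun ω => f ω * Real.sign (W ω l)) := by
    intro f hf l
    simpa [mul_comm] using hf.bdd_mul (hSm l).aestronglyMeasurable (c := 1) (Filter.Eventually.of_forall fun ω => abs_realSign_le_one _)
  constructor
  · ext r l
    have hZS : (∫ ω, Z ω r * Real.sign (W ω l)) = 0 := by
      have hind : IndepFun (fun ω => Z ω r) (fun ω => Real.sign (W ω l)) :=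
        hindep.comp (measurable_pi_apply r) (measurable_realSign.comp (measurable_pi_apply l))
      have h := hind.integral_mul_eq_mul_integral (hZint r).aestronglyMeasurable (hSint l).aestronglyMeasurable
      simpa [Pi.mul_apply, hZmean r] using h
    have hint : (∫ ω, Y ω r * Real.sign (W ω l))
        = ∑ k : Fin m, Θ r k * ∫ ω, W ω k * Real.sign (W ω l) := by
      have : (fun ω => Y ω r * Real.sign (W ω l))
          = fun ω => (∑ k : Fin m, Θ r k * (W ω k * Real.sign (W ω l)))
            + Z ω r * Real.sign (W ω l) := by
        funext ω
        rw [hY ω]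
        simp [Matrix.mulVec, dotProduct, Finset.sum_mul, add_mul, mul_assoc]
      rw [this, integral_add _ (hmulint _ (hZint r) l), hZS, add_zero,
        integral_finset_sum]
      · exact Finset.sum_congr rfl fun k _ => integral_const_mul _ _
      · exact fun k _ => ((hmulint _ (hWint k) l).const_mul _)
      · exact integrable_finset_sum _ fun k _ => ((hmulint _ (hWint k) l).const_mul _)
    rw [hNYW r l, Matrix.mul_apply, hint, Finset.sum_div]
    refine Finset.sum_congr rfl fun k _ => ?_
    rw [hNWW k l, mul_div_assoc]
  · intro l
    rw [hNWW l l]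
    have : (∫ ω, W ω l * Real.sign (W ω l)) = ∫ ω, |W ω l| := by
      exact integral_congr_ae (Filter.Eventually.of_forall fun ω => mul_realSign_self _)
    rw [this, div_self (hWpos l).ne']
end

section
/- Let m ≥ 1, let T ≥ 1 be an integer, let Θ : ℤ → (m×m real matrices) be periodic with period T, and let z : ℤ → ℝ^m. Define g(t,0) = I and g(t,j) = Θ(t)Θ(t−1)⋯Θ(t−j+1) for j ≥ 1. Suppose that for every t ∈ ℤ and every pair of indices r, l ∈ {1,…,m} one has ∑_{j=0}^∞ |g_{r,l}(t,j)| < ∞, where g_{r,l}(t,j) denotes the (r,l) entry of g(t,j), and suppose the sequence (z(t))_{t∈ℤ} is bounded, i.e. there exists C ≥ 0 with |z_l(t)| ≤ C for all t ∈ ℤ and l ∈ {1,…,m}. Then for every t ∈ ℤ the series ∑_{j=0}^∞ g(t,j) z(t−j) converges absolutely in each component, and the resulting function x(t) = ∑_{j=0}^∞ g(t,j) z(t−j) is a bounded solution of x(t) = Θ(t) x(t−1) + z(t) for all t ∈ ℤ, with sup_{t∈ℤ} max_r |x_r(t)| ≤ C · m · sup_{t∈ℤ} max_{r,l} ∑_{j=0}^∞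 |g_{r,l}(t,j)| < ∞. -/
/-- Bounded solution of the multidimensional periodic AR(1) equation. If `Θ` is
`T`-periodic, the transition products `g(t,j)` have absolutely summable entries, and `z` is
bounded by `C`, then `x(t) = ∑_{j=0}^∞ g(t,j) z(t-j)` converges absolutely componentwise,
satisfies `x(t) = Θ(t) x(t-1) + z(t)`, and is bounded:
`|x_r(t)| ≤ C · m · sup_{t',r',l'} ∑_j |g_{r',l'}(t',j)|`. -/
theorem par1_bounded_solution (m : ℕ) (hm : 1 ≤ m) (T : ℕ) (hT : 1 ≤ T)
    (Θ : ℤ → Matrix (Fin m) (Fin m) ℝ)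
    (hper : ∀ t : ℤ, Θ (t + T) = Θ t)
    (z : ℤ → Fin m → ℝ)
    (g : ℤ → ℕ → Matrix (Fin m) (Fin m) ℝ)
    (hg0 : ∀ t : ℤ, g t 0 = 1)
    (hgs : ∀ (t : ℤ) (j : ℕ), g t (j + 1) = Θ t * g (t - 1) j)
    (hgsum : ∀ (t : ℤ) (r l : Fin m), Summable (fun j : ℕ => |g t j r l|))
    (C : ℝ) (hC : 0 ≤ C)
    (hz : ∀ (t : ℤ) (l : Fin m), |z t l| ≤ C) :
    (∀ (t : ℤ) (r : Fin m),
        Summable (fun j : ℕ => |((g t j).mulVec (z (t - j))) r|)) ∧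
      ∀ x : ℤ → Fin m → ℝ,
        (∀ (t : ℤ) (r : Fin m),
            x t r = ∑' j : ℕ, ((g t j).mulVec (z (t - j))) r) →
          (∀ t : ℤ, x t = (Θ t).mulVec (x (t - 1)) + z t) ∧
          (∀ (t : ℤ) (r : Fin m),
            |x t r| ≤ C * m *
              ⨆ t' : ℤ, ⨆ r' : Fin m, ⨆ l' : Fin m, ∑' j : ℕ, |g t' j r' l'|) := by
  haveI : Nonempty (Fin m) := ⟨⟨0, hm⟩⟩
  -- abbreviation for the entrywise absolute series
  set S : ℤ → Fin m → Fin m → ℝ := fun t r l => ∑' j : ℕ, |g t j r l| with hSdef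
  have hSnn : ∀ t r l, 0 ≤ S t r l := fun t r l =>
    tsum_nonneg (fun j => abs_nonneg _)
  -- periodicity of g in t
  have gper : ∀ (j : ℕ) (t : ℤ), g (t + T) j = g t j := by
    intro j
    induction j with
    | zero => intro t; rw [hg0, hg0]
    | succ j ih =>
      intro t
      rw [hgs, hgs, hper]
      have h1 : t + (T : ℤ) - 1 = (t - 1) + T := by ring
      rw [h1, ih]
  have Sper : ∀ (t : ℤ) (r l : Fin m), S (t % (T : ℤ)) r l = S t r l := by
    intro t r l
    have hp : Function.Periodic (fun u : ℤ => S u r l) (T : ℤ) := by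
      intro u
      simp only [hSdef]
      congr 1
      ext j
      rw [gper]
    have : t % (T : ℤ) = t - (t / (T : ℤ)) * (T : ℤ) := by
      rw [Int.emod_def]; ring
    rw [this]
    exact hp.sub_int_mul_eq (t / (T : ℤ))
  -- a finite bound for S
  have hTpos : (0 : ℤ) < (T : ℤ) := by exact_mod_cast hT
  have hne : ((Finset.Ico (0 : ℤ) (T : ℤ)) ×ˢ (Finset.univ : Finset (Fin m)) ×ˢ
      (Finset.univ : Finset (Fin m))).Nonempty := by
    refine ⟨⟨0, ⟨⟨0, hm⟩, ⟨0, hm⟩⟩⟩, ?_⟩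
    simp [Finset.mem_Ico, hTpos]; omega
  set M : ℝ := ((Finset.Ico (0 : ℤ) (T : ℤ)) ×ˢ (Finset.univ : Finset (Fin m)) ×ˢ
      (Finset.univ : Finset (Fin m))).sup' hne (fun p => S p.1 p.2.1 p.2.2) with hMdef
  have hSleM : ∀ t r l, S t r l ≤ M := by
    intro t r l
    rw [← Sper t r l]
    refine Finset.le_sup' (f := fun p : ℤ × Fin m × Fin m => S p.1 p.2.1 p.2.2)
      (b := (⟨t % (T : ℤ), r, l⟩ : ℤ × Fin m × Fin m)) ?_
    simp only [Finset.mem_product, Finset.mem_Ico, Finset.mem_univ, and_true]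
    exact ⟨Int.emod_nonneg t (by positivity), Int.emod_lt_of_pos t hTpos⟩
  -- the triple iSup and the bound S ≤ B
  set B : ℝ := ⨆ t' : ℤ, ⨆ r' : Fin m, ⨆ l' : Fin m, S t' r' l' with hBdef
  have hbdd2 : ∀ t r, BddAbove (Set.range fun l' => S t r l') :=
    fun t r => (Set.finite_range _).bddAbove
  have hbdd1 : ∀ t, BddAbove (Set.range fun r' => ⨆ l', S t r' l') :=
    fun t => (Set.finite_range _).bddAbove
  have hbdd0 : BddAbove (Set.range fun t' : ℤ => ⨆ r', ⨆ l', S t' r' l') := by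
    refine ⟨M, ?_⟩
    rintro x ⟨t, rfl⟩
    exact ciSup_le fun r => ciSup_le fun l => hSleM t r l
  have hSleB : ∀ t r l, S t r l ≤ B := by
    intro t r l
    refine le_trans (le_ciSup (hbdd2 t r) l) ?_
    refine le_trans (le_ciSup (hbdd1 t) r) ?_
    exact le_ciSup hbdd0 t
  have hBnn : 0 ≤ B := le_trans (hSnn 0 ⟨0, hm⟩ ⟨0, hm⟩) (hSleB 0 _ _)
  -- part 1: summability
  have hdom : ∀ (t : ℤ) (j : ℕ) (r : Fin m),
      |((g t j).mulVec (z (t - j))) r| ≤ ∑ l, |g t j r l| * C := by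
    intro t j r
    calc |((g t j).mulVec (z (t - j))) r| = |∑ l, g t j r l * z (t - j) l| := by
          simp [Matrix.mulVec, dotProduct]
      _ ≤ ∑ l, |g t j r l * z (t - j) l| := Finset.abs_sum_le_sum_abs _ _
      _ ≤ ∑ l, |g t j r l| * C := by
          refine Finset.sum_le_sum fun l _ => ?_
          rw [abs_mul]
          exact mul_le_mul_of_nonneg_left (hz _ l) (abs_nonneg _)
  have hsumdom : ∀ (t : ℤ) (r : Fin m),
      Summable (fun j : ℕ => ∑ l, |g t j r l| * C) := by
    intro t r
    exact summable_sum (fun l _ => (hgsum t r l).mul_right C)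
  have part1 : ∀ (t : ℤ) (r : Fin m),
      Summable (fun j : ℕ => |((g t j).mulVec (z (t - j))) r|) := by
    intro t r
    exact Summable.of_nonneg_of_le (fun j => abs_nonneg _) (fun j => hdom t j r) (hsumdom t r)
  refine ⟨part1, ?_⟩
  intro x hx
  constructor
  · -- recursion
    intro t
    funext r
    have hsa : Summable (fun j : ℕ => ((g t j).mulVec (z (t - j))) r) := (part1 t r).of_abs
    rw [hx t r, Summable.tsum_eq_zero_add hsa]
    have h0 : ((g t 0).mulVec (z (t - (0 : ℕ)))) r = z t r := by
      rw [hg0]; simp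
    have hstep : ∀ j : ℕ, ((g t (j + 1)).mulVec (z (t - (j + 1 : ℕ)))) r =
        ∑ l, Θ t r l * ((g (t - 1) j).mulVec (z (t - 1 - j))) l := by
      intro j
      have harg : t - ((j + 1 : ℕ) : ℤ) = t - 1 - j := by push_cast; ring
      rw [hgs, harg, ← Matrix.mulVec_mulVec]
      simp [Matrix.mulVec, dotProduct]
    have hsuml : ∀ l : Fin m,
        Summable (fun j : ℕ => Θ t r l * ((g (t - 1) j).mulVec (z (t - 1 - j))) l) := by
      intro l
      have : Summable (fun j : ℕ => ((g (t - 1) j).mulVec (z (t - 1 - j))) l) :=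
        (part1 (t - 1) l).of_abs
      exact this.mul_left _
    calc ((g t 0).mulVec (z (t - (0 : ℕ)))) r +
          ∑' j : ℕ, ((g t (j + 1)).mulVec (z (t - (j + 1 : ℕ)))) r
        = z t r + ∑' j : ℕ, ∑ l, Θ t r l * ((g (t - 1) j).mulVec (z (t - 1 - j))) l := by
          rw [h0]; congr 1; exact tsum_congr hstep
      _ = z t r + ∑ l, ∑' j : ℕ, Θ t r l * ((g (t - 1) j).mulVec (z (t - 1 - j))) l := by
          rw [Summable.tsum_finsetSum (fun l _ => hsuml l)]
      _ = z t r + ∑ l, Θ t r l * x (t - 1) l := by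
          congr 1
          refine Finset.sum_congr rfl fun l _ => ?_
          rw [tsum_mul_left, hx (t - 1) l]
      _ = ((Θ t).mulVec (x (t - 1)) + z t) r := by
          simp [Matrix.mulVec, dotProduct]; ring
  · -- the bound
    intro t r
    rw [hx t r]
    have h1 : |∑' j : ℕ, ((g t j).mulVec (z (t - j))) r|
        ≤ ∑' j : ℕ, |((g t j).mulVec (z (t - j))) r| := by
      simpa [Real.norm_eq_abs] using norm_tsum_le_tsum_norm
        (f := fun j : ℕ => ((g t j).mulVec (z (t - j))) r) (by simpa [Real.norm_eq_abs] using part1 t r)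
    refine h1.trans ?_
    have h2 : ∑' j : ℕ, |((g t j).mulVec (z (t - j))) r|
        ≤ ∑' j : ℕ, ∑ l, |g t j r l| * C :=
      Summable.tsum_le_tsum (fun j => hdom t j r) (part1 t r) (hsumdom t r)
    refine h2.trans ?_
    have h3 : ∑' j : ℕ, ∑ l, |g t j r l| * C = ∑ l, S t r l * C := by
      rw [Summable.tsum_finsetSum (fun l _ => (hgsum t r l).mul_right C)]
      exact Finset.sum_congr rfl fun l _ => tsum_mul_right
    rw [h3]
    calc ∑ l, S t r l * C ≤ ∑ _l : Fin m, B * C := by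
          refine Finset.sum_le_sum fun l _ => ?_
          exact mul_le_mul_of_nonneg_right (hSleB t r l) hC
      _ = m * (B * C) := by simp [Finset.sum_const, Finset.card_univ, mul_comm]
      _ = C * m * B := by ring
end
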